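/- Suppose A, B ∈ ℝ satisfy A·α₁ + B·α₀ = −2β₀ and A·α₂ + B·α₁ = −2β₁, and define F(z) := 2(1+z)·p_c(−1) + ∫_{−1}^{z} h(t)(z − t) dt. Then F''(z) = h(z) for all z ∈ ℝ, F(−1) = F(1) = 0, F'(−1) = 2·p_c(−1), and F'(1) = −2·p_c(1). -/

import Mathlib

/-- if `(A,B)` solves the linear system, then
`F(z) = 2(1+z) p_c(-1) + ∫_{-1}^z h(t)(z-t) dt` satisfies `F'' = h`, `F(±1) = 0`,
`F'(-1) = 2 p_c(-1)` and `F'(1) = -2 p_c(1)`. -/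
theorem stmt2 {ι : Type*} [Fintype ι] [DecidableEq ι] [Nonempty ι]
    (x : ι → ℝ) (hx1 : ∀ a, |x a| ≤ 1) (hx0 : ∀ a, x a ≠ 0)
    (d : ι → ℕ) (hd : ∀ a, 1 ≤ d a) (s : ι → ℝ)
    (pc : ℝ → ℝ) (hpc : ∀ t, pc t = ∏ a, (1 + x a * t) ^ d a)
    (α : ℕ → ℝ) (hα : ∀ r, α r = ∫ t in (-1:ℝ)..1, pc t * t ^ r)
    (β : ℕ → ℝ)
    (hβ : ∀ r, β r = pc 1 + (-1:ℝ) ^ r * pc (-1) +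
      ∫ t in (-1:ℝ)..1, (∑ a, (d a : ℝ) * s a * x a * (1 + x a * t) ^ (d a - 1) *
        ∏ b ∈ Finset.univ.erase a, (1 + x b * t) ^ d b) * t ^ r)
    (A B : ℝ)
    (h : ℝ → ℝ)
    (hh : ∀ t, h t = (A * t + B) * pc t +
      ∑ a, 2 * (d a : ℝ) * s a * x a * (1 + x a * t) ^ (d a - 1) *
        ∏ b ∈ Finset.univ.erase a, (1 + x b * t) ^ d b)
    (hAB1 : A * α 1 + B * α 0 = -2 * β 0)
    (hAB2 : A * α 2 + B * α 1 = -2 * β 1)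
    (F : ℝ → ℝ)
    (hF : ∀ z, F z = 2 * (1 + z) * pc (-1) + ∫ t in (-1:ℝ)..z, h t * (z - t)) :
    ∃ F' : ℝ → ℝ, (∀ z, HasDerivAt F (F' z) z) ∧ (∀ z, HasDerivAt F' (h z) z) ∧
      F (-1) = 0 ∧ F 1 = 0 ∧ F' (-1) = 2 * pc (-1) ∧ F' 1 = -2 * pc 1 := by

  classical
  -- continuity facts
  have hcpc : Continuous pc := by
    rw [show pc = fun t => ∏ a, (1 + x a * t) ^ d a from funext hpc]
    exact continuous_finset_prod _ fun a _ => by fun_prop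
  set S : ℝ → ℝ := fun t => ∑ a, (d a : ℝ) * s a * x a * (1 + x a * t) ^ (d a - 1) *
      ∏ b ∈ Finset.univ.erase a, (1 + x b * t) ^ d b with hS
  have hcS : Continuous S := by
    apply continuous_finset_sum
    intro a _
    exact Continuous.mul (by fun_prop) (continuous_finset_prod _ fun b _ => by fun_prop)
  have hh2 : ∀ t, h t = (A * t + B) * pc t + 2 * S t := by
    intro t
    rw [hh, hS]
    simp only [Finset.mul_sum]
    congr 1
    exact Finset.sum_congr rfl fun a _ => by ring
  have hch : Continuous h := by
    rw [show h = fun t => (A * t + B) * pc t + 2 * S t from funext hh2]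
    fun_prop
  -- key integral computation
  have key : ∀ r : ℕ, (∫ t in (-1:ℝ)..1, h t * t ^ r)
      = A * α (r+1) + B * α r + 2 * (β r - pc 1 - (-1:ℝ) ^ r * pc (-1)) := by
    intro r
    have heq : ∀ t ∈ Set.uIcc (-1:ℝ) 1, h t * t ^ r
        = A * (pc t * t ^ (r+1)) + (B * (pc t * t ^ r) + 2 * (S t * t ^ r)) := by
      intro t _
      rw [hh2 t, pow_succ]
      ring
    rw [intervalIntegral.integral_congr heq]
    rw [intervalIntegral.integral_add ((by fun_prop : Continuous fun t : ℝ => A * (pc t * t ^ (r+1))).intervalIntegrable _ _)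
      ((by fun_prop : Continuous fun t : ℝ => B * (pc t * t ^ r) + 2 * (S t * t ^ r)).intervalIntegrable _ _),
      intervalIntegral.integral_add ((by fun_prop : Continuous fun t : ℝ => B * (pc t * t ^ r)).intervalIntegrable _ _)
      ((by fun_prop : Continuous fun t : ℝ => 2 * (S t * t ^ r)).intervalIntegrable _ _),
      intervalIntegral.integral_const_mul, intervalIntegral.integral_const_mul,
      intervalIntegral.integral_const_mul]
    rw [hα, hα, hβ]
    ring
  have I0 : (∫ t in (-1:ℝ)..1, h t) = A * α 1 + B * α 0 + 2 * (β 0 - pc 1 - pc (-1)) := by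
    have := key 0
    simpa using this
  have I1 : (∫ t in (-1:ℝ)..1, h t * t) = A * α 2 + B * α 1 + 2 * (β 1 - pc 1 + pc (-1)) := by
    have := key 1
    simp only [pow_one] at this
    rw [this]; ring
  -- the antiderivative
  set G : ℝ → ℝ := fun z => ∫ t in (-1:ℝ)..z, h t with hG
  set H : ℝ → ℝ := fun z => ∫ t in (-1:ℝ)..z, h t * t with hHdef
  refine ⟨fun z => 2 * pc (-1) + G z, ?_, ?_, ?_, ?_, ?_, ?_⟩
  · intro z
    have hFz : F = fun z => 2 * (1 + z) * pc (-1) + (z * G z - H z) := by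
      funext z
      rw [hF]
      congr 1
      have heq : ∀ t ∈ Set.uIcc (-1:ℝ) z, h t * (z - t) = z * h t - h t * t := by
        intro t _; ring
      rw [intervalIntegral.integral_congr heq,
        intervalIntegral.integral_sub ((by fun_prop : Continuous fun t : ℝ => z * h t).intervalIntegrable _ _)
          ((by fun_prop : Continuous fun t : ℝ => h t * t).intervalIntegrable _ _),
        intervalIntegral.integral_const_mul]
    rw [hFz]
    have hGd : HasDerivAt G (h z) z :=
      intervalIntegral.integral_hasDerivAt_right (hch.intervalIntegrable _ _)
        (hch.stronglyMeasurableAtFilter _ _) hch.continuousAt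
    have hcht : Continuous fun t : ℝ => h t * t := by fun_prop
    have hHd : HasDerivAt H (h z * z) z :=
      intervalIntegral.integral_hasDerivAt_right (hcht.intervalIntegrable _ _)
        (hcht.stronglyMeasurableAtFilter _ _) hcht.continuousAt
    have hlin : HasDerivAt (fun z : ℝ => 2 * (1 + z) * pc (-1)) (2 * pc (-1)) z := by
      have h1 : HasDerivAt (fun z : ℝ => 1 + z) 1 z := (hasDerivAt_id z).const_add 1
      simpa using (h1.const_mul (2:ℝ)).mul_const (pc (-1))
    have := hlin.add (((hasDerivAt_id z).mul hGd).sub hHd)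
    refine this.congr_deriv ?_
    simp only [id_eq, one_mul]
    ring
  · intro z
    exact (intervalIntegral.integral_hasDerivAt_right (hch.intervalIntegrable _ _)
        (hch.stronglyMeasurableAtFilter _ _) hch.continuousAt).const_add (2 * pc (-1))
  · rw [hF]; simp
  · rw [hF]
    have heq : ∀ t ∈ Set.uIcc (-1:ℝ) 1, h t * (1 - t) = 1 * h t - h t * t := by
      intro t _; ring
    rw [intervalIntegral.integral_congr heq,
      intervalIntegral.integral_sub ((by fun_prop : Continuous fun t : ℝ => 1 * h t).intervalIntegrable _ _)
        ((by fun_prop : Continuous fun t : ℝ => h t * t).intervalIntegrable _ _),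
      intervalIntegral.integral_const_mul, I0, I1]
    nlinarith [hAB1, hAB2]

  · simp [hG]
  · show 2 * pc (-1) + G 1 = -2 * pc 1
    rw [hG]
    simp only
    rw [I0]
    nlinarith [hAB1]
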